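/- For a critical well-controlled branching random walk with λ* > 0 satisfying Λ'(λ*) = 0 and f(λ*) = log E[B], the maximum displacement R̄ = sup_{u ∈ T} S_u over all vertices of the tree satisfies P(R̄ ≥ k) ≤ e^{-λ* k} for all k ≥ 1. -/

import Mathlib

open MeasureTheory ProbabilityTheory Finset
open scoped ENNReal NNReal

/-- Nodes of the infinite Ulam–Harris tree: a node is a finite word of integers. -/
abbrev BRWNode := List ℕ

/-- `u` belongs to the Galton–Watson tree determined by the offspring counts `B`. -/
def BRWmem {Ω : Type*} (B : BRWNode → Ω → ℕ) (u : BRWNode) (ω : Ω) : Prop :=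
  ∀ k, (h : k < u.length) → u.get ⟨k, h⟩ < B (u.take k) ω

/-- The displacement of node `u` in the branching random walk. -/
def BRWpos {Ω : Type*} (X : BRWNode → Ω → ℝ) (u : BRWNode) (ω : Ω) : ℝ :=
  ∑ k ∈ range u.length, X (u.take (k + 1)) ω

noncomputable section BRWAux

/-! ### Combinatorial auxiliary material -/

def zext {n : ℕ} (z : Fin n → ℤ) (i : ℕ) : ℤ := if h : i < n then z ⟨i, h⟩ else 0

def psumZ {n : ℕ} (z : Fin n → ℤ) (j : ℕ) : ℤ := ∑ i ∈ range j, zext z i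

def AdmZ (k : ℤ) (n : ℕ) (z : Fin n → ℤ) : Prop :=
  (∀ j < n, psumZ z j < k) ∧ k ≤ psumZ z n

def AliveZ (k : ℤ) (n : ℕ) (z : Fin n → ℤ) : Prop := ∀ j ≤ n, psumZ z j < k

lemma zext_snoc_lt {n : ℕ} (z : Fin n → ℤ) (a : ℤ) (i : ℕ) (hi : i < n) :
    zext (Fin.snoc z a) i = zext z i := by
  simp only [zext, dif_pos hi, dif_pos (Nat.lt_succ_of_lt hi)]
  have : (⟨i, Nat.lt_succ_of_lt hi⟩ : Fin (n+1)) = Fin.castSucc ⟨i, hi⟩ := rfl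
  rw [this, Fin.snoc_castSucc]

lemma zext_snoc_last {n : ℕ} (z : Fin n → ℤ) (a : ℤ) :
    zext (Fin.snoc z a) n = a := by
  simp only [zext, dif_pos (Nat.lt_succ_self n)]
  have : (⟨n, Nat.lt_succ_self n⟩ : Fin (n+1)) = Fin.last n := rfl
  rw [this, Fin.snoc_last]

lemma psumZ_snoc_le {n : ℕ} (z : Fin n → ℤ) (a : ℤ) (j : ℕ) (hj : j ≤ n) :
    psumZ (Fin.snoc z a) j = psumZ z j := by
  unfold psumZ
  refine Finset.sum_congr rfl fun i hi => ?_
  exact zext_snoc_lt z a i (lt_of_lt_of_le (mem_range.1 hi) hj)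

lemma psumZ_snoc_succ {n : ℕ} (z : Fin n → ℤ) (a : ℤ) :
    psumZ (Fin.snoc z a) (n+1) = psumZ z n + a := by
  unfold psumZ
  rw [Finset.sum_range_succ, zext_snoc_last]
  congr 1
  refine Finset.sum_congr rfl fun i hi => zext_snoc_lt z a i (mem_range.1 hi)

lemma psumZ_zero {n : ℕ} (z : Fin n → ℤ) : psumZ z 0 = 0 := by simp [psumZ]

lemma psumZ_length {n : ℕ} (z : Fin n → ℤ) : psumZ z n = ∑ j : Fin n, z j := by
  unfold psumZ
  rw [← Fin.sum_univ_eq_sum_range (fun i => zext z i) n]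
  refine Finset.sum_congr rfl fun i _ => ?_
  simp [zext, i.isLt]

lemma tsum_pi_prod {α : Type*} [Countable α] (g : α → ℝ≥0∞) :
    ∀ n : ℕ, ∑' z : (Fin n → α), ∏ j, g (z j) = (∑' a, g a) ^ n := by
  intro n
  induction n with
  | zero =>
    simp only [pow_zero, Finset.univ_eq_empty, Finset.prod_empty]
    rw [tsum_eq_single (default : Fin 0 → α)]
    · intro b hb; exact absurd (Subsingleton.elim b default) hb
  | succ n ih =>
    rw [← (Fin.consEquiv (fun _ : Fin (n+1) => α)).tsum_eq (fun z => ∏ j, g (z j))]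
    have : ∀ p : α × (Fin n → α),
        (∏ j, g ((Fin.consEquiv (fun _ : Fin (n+1) => α)) p j)) = g p.1 * ∏ j, g (p.2 j) := by
      intro p
      rw [Fin.prod_univ_succ]
      simp [Fin.consEquiv]
    rw [tsum_congr this, ENNReal.tsum_prod']
    simp_rw [ENNReal.tsum_mul_left, ENNReal.tsum_mul_right]
    rw [ih, pow_succ]
    ring

/-- total mass of admissible (first-crossing at time n) paths under step weights ρ -/
def TtZ (k : ℤ) (ρ : ℤ → ℝ≥0∞) (n : ℕ) : ℝ≥0∞ :=
  ∑' z : (Fin n → ℤ), Set.indicator {z | AdmZ k n z} (fun z => ∏ j, ρ (z j)) z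

def RrZ (k : ℤ) (ρ : ℤ → ℝ≥0∞) (n : ℕ) : ℝ≥0∞ :=
  ∑' z : (Fin n → ℤ), Set.indicator {z | AliveZ k n z} (fun z => ∏ j, ρ (z j)) z

lemma RrZ_zero (k : ℤ) (ρ : ℤ → ℝ≥0∞) (hk : 0 < k) : RrZ k ρ 0 = 1 := by
  unfold RrZ
  rw [tsum_eq_single (default : Fin 0 → ℤ)
    (fun b hb => absurd (Subsingleton.elim b default) hb)]
  rw [Set.indicator_of_mem]
  · simp
  · intro j hj
    simpa [Nat.le_zero.1 hj, psumZ_zero] using hk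

lemma TtZ_zero (k : ℤ) (ρ : ℤ → ℝ≥0∞) (hk : 0 < k) : TtZ k ρ 0 = 0 := by
  unfold TtZ
  refine ENNReal.summable.tsum_eq_zero_iff.2 fun z => ?_
  rw [Set.indicator_of_notMem]
  rintro ⟨-, h2⟩
  rw [psumZ_zero] at h2
  omega

lemma RrZ_step (k : ℤ) (ρ : ℤ → ℝ≥0∞) (hρ : ∑' a, ρ a = 1) (n : ℕ) :
    RrZ k ρ n = RrZ k ρ (n+1) + TtZ k ρ (n+1) := by
  classical
  have key : ∀ w : Fin (n+1) → ℤ,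
      Set.indicator {z | ∀ j ≤ n, psumZ z j < k} (fun z => ∏ j, ρ (z j)) w =
      Set.indicator {z | AliveZ k (n+1) z} (fun z => ∏ j, ρ (z j)) w +
      Set.indicator {z | AdmZ k (n+1) z} (fun z => ∏ j, ρ (z j)) w := by
    intro w
    by_cases hP : ∀ j ≤ n, psumZ w j < k
    · rw [Set.indicator_of_mem (show w ∈ {z : Fin (n+1) → ℤ | ∀ j ≤ n, psumZ z j < k} from hP)]
      by_cases hlast : psumZ w (n+1) < k
      · rw [Set.indicator_of_mem, Set.indicator_of_notMem, add_zero]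
        · rintro ⟨-, h2⟩; exact absurd h2 (not_le.2 hlast)
        · intro j hj
          rcases eq_or_lt_of_le hj with h | h
          · exact h ▸ hlast
          · exact hP j (Nat.lt_succ_iff.1 h)
      · rw [Set.indicator_of_notMem, Set.indicator_of_mem, zero_add]
        · exact ⟨fun j hj => hP j (Nat.lt_succ_iff.1 hj), not_lt.1 hlast⟩
        · intro hAl; exact hlast (hAl (n+1) le_rfl)
    · rw [Set.indicator_of_notMem
          (show w ∉ {z : Fin (n+1) → ℤ | ∀ j ≤ n, psumZ z j < k} from hP),
        Set.indicator_of_notMem, Set.indicator_of_notMem, add_zero]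
      · rintro ⟨h1, -⟩; exact hP fun j hj => h1 j (Nat.lt_succ_of_le hj)
      · intro hAl; exact hP fun j hj => hAl j (le_trans hj (Nat.le_succ n))
  have split : (∑' w : (Fin (n+1) → ℤ),
      Set.indicator {z | ∀ j ≤ n, psumZ z j < k} (fun z => ∏ j, ρ (z j)) w)
      = RrZ k ρ (n+1) + TtZ k ρ (n+1) := by
    rw [tsum_congr key, ENNReal.tsum_add]; rfl
  rw [← split]
  rw [← (Fin.snocEquiv (fun _ : Fin (n+1) => ℤ)).tsum_eq]
  have eval : ∀ p : ℤ × (Fin n → ℤ),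
      Set.indicator {z | ∀ j ≤ n, psumZ z j < k} (fun z => ∏ j, ρ (z j))
        ((Fin.snocEquiv (fun _ : Fin (n+1) => ℤ)) p)
      = Set.indicator {z | AliveZ k n z} (fun z => ∏ j, ρ (z j)) p.2 * ρ p.1 := by
    intro ⟨a, z⟩
    dsimp only
    have hsnoc : (Fin.snocEquiv (fun _ : Fin (n+1) => ℤ)) (a, z) = Fin.snoc z a := by
      funext i; rfl
    rw [hsnoc]
    have hmem : (Fin.snoc z a ∈ {z : Fin (n+1) → ℤ | ∀ j ≤ n, psumZ z j < k}) ↔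
        AliveZ k n z := by
      constructor
      · intro h j hj; rw [← psumZ_snoc_le z a j hj]; exact h j hj
      · intro h j hj; rw [psumZ_snoc_le z a j hj]; exact h j hj
    have hprod : (∏ j, ρ ((Fin.snoc z a : Fin (n+1) → ℤ) j)) = (∏ j, ρ (z j)) * ρ a := by
      rw [Fin.prod_univ_castSucc]
      simp [Fin.snoc_castSucc, Fin.snoc_last]
    by_cases h : AliveZ k n z
    · rw [Set.indicator_of_mem (hmem.2 h),
        Set.indicator_of_mem (show z ∈ {z : Fin n → ℤ | AliveZ k n z} from h), hprod]
    · rw [Set.indicator_of_notMem (fun hc => h (hmem.1 hc)),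
        Set.indicator_of_notMem (show z ∉ {z : Fin n → ℤ | AliveZ k n z} from h), zero_mul]
  rw [tsum_congr eval, ENNReal.tsum_prod']
  simp_rw [ENNReal.tsum_mul_right]
  rw [ENNReal.tsum_mul_left, hρ, mul_one]
  rfl

lemma TtZ_tsum_le (k : ℤ) (ρ : ℤ → ℝ≥0∞) (hk : 0 < k) (hρ : ∑' a, ρ a = 1) :
    ∑' n, TtZ k ρ n ≤ 1 := by
  have hpart : ∀ N, (∑ n ∈ range (N+1), TtZ k ρ n) + RrZ k ρ N = 1 := by
    intro N
    induction N with
    | zero => simp [TtZ_zero k ρ hk, RrZ_zero k ρ hk]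
    | succ N ih =>
      rw [Finset.sum_range_succ, add_assoc, add_comm (TtZ k ρ (N+1)), ← RrZ_step k ρ hρ N]
      exact ih
  refine Summable.tsum_le_of_sum_range_le ENNReal.summable fun N => ?_
  calc (∑ n ∈ range N, TtZ k ρ n) ≤ ∑ n ∈ range (N+1), TtZ k ρ n :=
        Finset.sum_le_sum_of_subset (Finset.range_subset_range.2 (Nat.le_succ N))
    _ ≤ 1 := by rw [← hpart N]; exact le_add_right le_rfl

/-! ### Independence auxiliary lemma -/

lemma indep_prod_lemma {Ω : Type*} [MeasurableSpace Ω] (μ : Measure Ω)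
    (B : List ℕ → Ω → ℕ) (X : List ℕ → Ω → ℝ)
    (hindep : iIndepFun
      (Sum.elim (fun u ω => ((B u ω : ℝ))) X) μ)
    (u : List ℕ) (z : Fin u.length → ℤ) :
    μ (⋂ i : Fin u.length ⊕ Fin u.length, Sum.elim
        (fun j : Fin u.length => {ω | u.get j < B (u.take (j : ℕ)) ω})
        (fun j : Fin u.length => {ω | X (u.take ((j : ℕ)+1)) ω = ((z j : ℤ) : ℝ)}) i)
      = ∏ j : Fin u.length,
          (μ {ω | u.get j < B (u.take (j : ℕ)) ω} *
           μ {ω | X (u.take ((j : ℕ)+1)) ω = ((z j : ℤ) : ℝ)}) := by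
  classical
  set f := Sum.elim (fun u ω => ((B u ω : ℝ))) X with hf
  set g : Fin u.length ⊕ Fin u.length → (List ℕ) ⊕ (List ℕ) :=
    Sum.map (fun j : Fin u.length => u.take (j : ℕ))
      (fun j : Fin u.length => u.take ((j : ℕ)+1)) with hg
  have hlen1 : ∀ j : Fin u.length, (u.take (j : ℕ)).length = (j : ℕ) := by
    intro j; rw [List.length_take]; exact min_eq_left (le_of_lt j.isLt)
  have hlen2 : ∀ j : Fin u.length, (u.take ((j : ℕ)+1)).length = (j : ℕ)+1 := by
    intro j; rw [List.length_take]; exact min_eq_left j.isLt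
  have ginj : Function.Injective g := by
    rw [hg]
    refine Function.Injective.sumMap ?_ ?_
    · intro a b hab
      have := congrArg List.length hab
      rw [hlen1 a, hlen1 b] at this
      exact Fin.ext this
    · intro a b hab
      have := congrArg List.length hab
      rw [hlen2 a, hlen2 b] at this
      exact Fin.ext (Nat.succ_injective this)
  set sets : (List ℕ ⊕ List ℕ) → Set ℝ :=
    Sum.elim (fun v => Set.Ioi ((u.getD v.length 0 : ℕ) : ℝ))
      (fun v => {((zext z (v.length - 1) : ℤ) : ℝ)}) with hsets
  have hmeassets : ∀ i ∈ Finset.image g Finset.univ, MeasurableSet (sets i) := by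
    rintro (v | v) _
    · exact measurableSet_Ioi
    · exact measurableSet_singleton _
  have key := hindep.measure_inter_preimage_eq_mul (Finset.image g Finset.univ) hmeassets
  have hcomp : ∀ y : Fin u.length ⊕ Fin u.length, f (g y) ⁻¹' sets (g y) = Sum.elim
      (fun j : Fin u.length => {ω | u.get j < B (u.take (j : ℕ)) ω})
      (fun j : Fin u.length => {ω | X (u.take ((j : ℕ)+1)) ω = ((z j : ℤ) : ℝ)}) y := by
    rintro (j | j)
    · ext ω
      simp only [hg, Sum.map_inl, hf, Sum.elim_inl, hsets, Set.mem_preimage, Set.mem_Ioi,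
        Set.mem_setOf_eq, hlen1 j]
      rw [List.getD_eq_getElem u 0 j.isLt]
      constructor
      · intro h; exact_mod_cast h
      · intro h; exact_mod_cast h
    · ext ω
      simp only [hg, Sum.map_inr, hf, Sum.elim_inr, hsets, Set.mem_preimage,
        Set.mem_singleton_iff, Set.mem_setOf_eq, hlen2 j]
      have : zext z ((j : ℕ) + 1 - 1) = z j := by
        simp only [Nat.add_sub_cancel, zext, dif_pos j.isLt, Fin.eta]
      rw [this]
  rw [Finset.set_biInter_finset_image] at key
  have huniv : (⋂ y ∈ (Finset.univ : Finset (Fin u.length ⊕ Fin u.length)),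
      f (g y) ⁻¹' sets (g y)) = ⋂ y, f (g y) ⁻¹' sets (g y) := by simp
  rw [huniv] at key
  rw [Set.iInter_congr hcomp] at key
  rw [key, Finset.prod_image (fun a _ b _ hab => ginj hab)]
  have : ∀ y : Fin u.length ⊕ Fin u.length, μ (f (g y) ⁻¹' sets (g y)) = Sum.elim
      (fun j : Fin u.length => μ {ω | u.get j < B (u.take (j : ℕ)) ω})
      (fun j : Fin u.length => μ {ω | X (u.take ((j : ℕ)+1)) ω = ((z j : ℤ) : ℝ)}) y := by
    intro y; rw [hcomp y]; cases y <;> rfl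
  rw [Finset.prod_congr rfl (fun y _ => this y)]
  rw [Fintype.prod_sum_type]
  simp only [Sum.elim_inl, Sum.elim_inr]
  rw [← Finset.prod_mul_distrib]

/-! ### Position bookkeeping -/

lemma BRWpos_take {Ω : Type*} (X : BRWNode → Ω → ℝ) (u : List ℕ) (ω : Ω) (j : ℕ)
    (hj : j ≤ u.length) :
    BRWpos X (u.take j) ω = ∑ i ∈ range j, X (u.take (i+1)) ω := by
  unfold BRWpos
  rw [List.length_take, min_eq_left hj]
  refine Finset.sum_congr rfl fun i hi => ?_
  rw [List.take_take]
  congr 2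
  exact min_eq_left (Nat.succ_le_of_lt (mem_range.1 hi))

lemma BRWpos_eq_psum {Ω : Type*} (X : BRWNode → Ω → ℝ) (u : List ℕ) (ω : Ω)
    (z : Fin u.length → ℤ)
    (hz : ∀ j : Fin u.length, X (u.take ((j : ℕ)+1)) ω = ((z j : ℤ) : ℝ))
    (j : ℕ) (hj : j ≤ u.length) :
    BRWpos X (u.take j) ω = ((psumZ z j : ℤ) : ℝ) := by
  rw [BRWpos_take X u ω j hj]
  unfold psumZ
  push_cast
  refine Finset.sum_congr rfl fun i hi => ?_
  have hi' : i < u.length := lt_of_lt_of_le (mem_range.1 hi) hj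
  rw [hz ⟨i, hi'⟩]
  unfold zext
  rw [dif_pos hi']

lemma tsum_ite_lt (b : ℕ) : ∑' i : ℕ, (if i < b then (1:ℝ≥0∞) else 0) = b := by
  rw [tsum_eq_sum (s := Finset.range b) (fun i hi => if_neg (by simpa using hi))]
  rw [Finset.sum_congr rfl (fun i hi => if_pos (Finset.mem_range.1 hi))]
  simp

end BRWAux

/-- For a critical well-controlled branching random walk, the maximum displacement
`R̄ = sup_{u ∈ T} S_u` over all vertices of the tree satisfies
`P(R̄ ≥ k) ≤ e^{-λ* k}` for all `k ≥ 1`. -/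
theorem brw_max_upper_tail {Ω : Type*} [MeasurableSpace Ω] (μ : Measure Ω)
    [IsProbabilityMeasure μ]
    (B : BRWNode → Ω → ℕ) (X : BRWNode → Ω → ℝ)
    (hBmeas : ∀ u, Measurable (B u)) (hXmeas : ∀ u, Measurable (X u))
    (hindep : iIndepFun
      (Sum.elim (fun u ω => ((B u ω : ℝ))) X) μ)
    (hBident : ∀ u, μ.map (B u) = μ.map (B []))
    (hXident : ∀ u, μ.map (X u) = μ.map (X [0]))
    (hBint : Integrable (fun ω => (B [] ω : ℝ)) μ)
    (hBsup : 1 < ∫ ω, (B [] ω : ℝ) ∂μ)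
    (hlat : ∀ᵐ ω ∂μ, ∃ z : ℤ, X [0] ω = z)
    (Λ : ℝ → ℝ) (hΛ : ∀ t, Λ t = Real.log (∫ ω, Real.exp (t * X [0] ω) ∂μ))
    (lam : ℝ) (hlam : 0 < lam)
    (ε : ℝ) (hε : 0 < ε)
    (hdom : ∀ t : ℝ, |t - lam| < ε → Integrable (fun ω => Real.exp (t * X [0] ω)) μ)
    (hderiv : HasDerivAt Λ 0 lam)
    (hcrit : -Λ lam = Real.log (∫ ω, (B [] ω : ℝ) ∂μ)) :
    ∀ k : ℕ, 1 ≤ k →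
      μ {ω | ∃ u, BRWmem B u ω ∧ (k : ℝ) ≤ BRWpos X u ω} ≤
        ENNReal.ofReal (Real.exp (-(lam * k))) := by
  intro k hk
  classical
  have hk0 : (0 : ℤ) < (k : ℤ) := by exact_mod_cast hk
  -- basic quantities
  set pB : ℕ → ℝ≥0∞ := fun i => μ {ω | i < B [] ω} with hpB
  set νX : ℤ → ℝ≥0∞ := fun zz => μ {ω | X [0] ω = (zz : ℝ)} with hνX
  set mE : ℝ≥0∞ := ∑' i, pB i with hmE
  set ρ : ℤ → ℝ≥0∞ :=
    fun zz => mE * (ENNReal.ofReal (Real.exp (lam * zz)) * νX zz) with hρdef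
  -- identical-distribution transfers
  have hXeq : ∀ v (r : ℝ), μ {ω | X v ω = r} = μ {ω | X [0] ω = r} := by
    intro v r
    rw [show {ω | X v ω = r} = X v ⁻¹' {r} from rfl,
      show {ω | X [0] ω = r} = X [0] ⁻¹' {r} from rfl,
      ← Measure.map_apply (hXmeas v) (measurableSet_singleton r), hXident v,
      Measure.map_apply (hXmeas [0]) (measurableSet_singleton r)]
  have hBeq : ∀ v (c : ℕ), μ {ω | c < B v ω} = μ {ω | c < B [] ω} := by
    intro v c
    have hms : MeasurableSet {m : ℕ | c < m} := (Set.to_countable _).measurableSet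
    rw [show {ω | c < B v ω} = B v ⁻¹' {m | c < m} from rfl,
      ← Measure.map_apply (hBmeas v) hms, hBident v,
      Measure.map_apply (hBmeas []) hms]
    rfl
  have hXlatv : ∀ v, μ {ω | ∀ m : ℤ, X v ω ≠ (m : ℝ)} = 0 := by
    intro v
    have hms : MeasurableSet ((Set.range (fun m : ℤ => (m : ℝ)))ᶜ) :=
      (Set.countable_range _).measurableSet.compl
    have h1 : ∀ (Y : Ω → ℝ), {ω | ∀ m : ℤ, Y ω ≠ (m : ℝ)}
        = Y ⁻¹' (Set.range (fun m : ℤ => (m : ℝ)))ᶜ := by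
      intro Y; ext ω
      simp [Set.mem_compl_iff, Set.mem_range, not_exists, eq_comm]
    rw [h1, ← Measure.map_apply (hXmeas v) hms, hXident v,
      Measure.map_apply (hXmeas [0]) hms, ← h1]
    have := ae_iff.1 hlat
    convert this using 2
    ext ω
    simp [not_exists]
  -- measurable helper sets
  have hBsetmeas : ∀ i : ℕ, MeasurableSet {ω | i < B [] ω} := by
    intro i
    exact hBmeas [] ((Set.to_countable {m : ℕ | i < m}).measurableSet)
  have hXsetmeas : ∀ zz : ℤ, MeasurableSet {ω | X [0] ω = (zz : ℝ)} :=
    fun zz => hXmeas [0] (measurableSet_singleton _)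
  -- identification of mE with the real mean
  have hBexp : mE = ENNReal.ofReal (∫ ω, (B [] ω : ℝ) ∂μ) := by
    have h1 : ∀ ω, (B [] ω : ℝ≥0∞)
        = ∑' i : ℕ, Set.indicator {ω | i < B [] ω} (fun _ => (1:ℝ≥0∞)) ω := by
      intro ω
      have h2 : ∀ i : ℕ, Set.indicator {ω | i < B [] ω} (fun _ => (1:ℝ≥0∞)) ω
          = if i < B [] ω then 1 else 0 := by
        intro i
        by_cases h : i < B [] ω
        · rw [Set.indicator_of_mem (show ω ∈ {ω | i < B [] ω} from h), if_pos h]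
        · rw [Set.indicator_of_notMem (show ω ∉ {ω | i < B [] ω} from h), if_neg h]
      rw [tsum_congr h2, tsum_ite_lt]
    have h2 : (∫⁻ ω, (B [] ω : ℝ≥0∞) ∂μ) = mE := by
      rw [lintegral_congr h1,
        lintegral_tsum (fun i => (measurable_const.indicator (hBsetmeas i)).aemeasurable)]
      refine tsum_congr fun i => ?_
      rw [lintegral_indicator_const (hBsetmeas i), one_mul]
    have h3 : ENNReal.ofReal (∫ ω, (B [] ω : ℝ) ∂μ)
        = ∫⁻ ω, ENNReal.ofReal ((B [] ω : ℝ)) ∂μ :=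
      ofReal_integral_eq_lintegral_ofReal hBint
        (Filter.Eventually.of_forall fun ω => Nat.cast_nonneg _)
    rw [← h2, h3]
    refine lintegral_congr fun ω => ?_
    rw [ENNReal.ofReal_natCast]
  -- identification of the tilted mass with the real mgf
  have hintexp : Integrable (fun ω => Real.exp (lam * X [0] ω)) μ := by
    refine hdom lam ?_
    simpa using hε
  have hMexp : (∑' zz : ℤ, ENNReal.ofReal (Real.exp (lam * zz)) * νX zz)
      = ENNReal.ofReal (∫ ω, Real.exp (lam * X [0] ω) ∂μ) := by
    have hae : (fun ω => ENNReal.ofReal (Real.exp (lam * X [0] ω)))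
        =ᵐ[μ] fun ω => ∑' zz : ℤ, Set.indicator {ω | X [0] ω = (zz : ℝ)}
          (fun _ => ENNReal.ofReal (Real.exp (lam * zz))) ω := by
      filter_upwards [hlat] with ω hω
      obtain ⟨z0, hz0⟩ := hω
      rw [tsum_eq_single z0]
      · rw [Set.indicator_of_mem (show ω ∈ {ω | X [0] ω = (z0 : ℝ)} from hz0), hz0]
      · intro w hw
        rw [Set.indicator_of_notMem]
        intro hmem
        have hzw : z0 = w := by exact_mod_cast hz0.symm.trans hmem
        exact hw hzw.symm
    rw [ofReal_integral_eq_lintegral_ofReal hintexp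
        (Filter.Eventually.of_forall fun ω => (Real.exp_pos _).le),
      lintegral_congr_ae hae,
      lintegral_tsum (fun zz => (measurable_const.indicator (hXsetmeas zz)).aemeasurable)]
    refine tsum_congr fun zz => ?_
    rw [lintegral_indicator_const (hXsetmeas zz)]
  -- the tilted weights sum to one
  have hm0 : (0:ℝ) < ∫ ω, (B [] ω : ℝ) ∂μ := lt_trans one_pos hBsup
  haveI : NeZero μ := ⟨IsProbabilityMeasure.ne_zero μ⟩
  have hM0 : (0:ℝ) < ∫ ω, Real.exp (lam * X [0] ω) ∂μ := integral_exp_pos hintexp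
  have hmul1 : (∫ ω, (B [] ω : ℝ) ∂μ) * (∫ ω, Real.exp (lam * X [0] ω) ∂μ) = 1 := by
    rw [← Real.exp_log hm0, ← Real.exp_log hM0, ← Real.exp_add, ← hcrit, ← hΛ lam]
    simp
  have hρ1 : ∑' zz, ρ zz = 1 := by
    rw [hρdef]
    rw [ENNReal.tsum_mul_left, hMexp, hBexp, ← ENNReal.ofReal_mul hm0.le, hmul1]
    exact ENNReal.ofReal_one
  -- the first-crossing decomposition of the target event
  have hcover : {ω | ∃ u, BRWmem B u ω ∧ (k : ℝ) ≤ BRWpos X u ω}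
      ⊆ ⋃ u : List ℕ, {ω | BRWmem B u ω ∧ (k : ℝ) ≤ BRWpos X u ω ∧
          ∀ j < u.length, BRWpos X (u.take j) ω < k} := by
    rintro ω ⟨u, humem, hupos⟩
    have hexQ : ∃ j, (k : ℝ) ≤ BRWpos X (u.take j) ω :=
      ⟨u.length, by rwa [List.take_length]⟩
    have hQn : (k : ℝ) ≤ BRWpos X (u.take (Nat.find hexQ)) ω := Nat.find_spec hexQ
    have hnle : Nat.find hexQ ≤ u.length :=
      Nat.find_min' hexQ (by rwa [List.take_length])
    have hlen : (u.take (Nat.find hexQ)).length = Nat.find hexQ := by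
      rw [List.length_take]; exact min_eq_left hnle
    refine Set.mem_iUnion.2 ⟨u.take (Nat.find hexQ), ?_, hQn, ?_⟩
    · intro k' h
      have hk' : k' < Nat.find hexQ := by rwa [hlen] at h
      have htt : (u.take (Nat.find hexQ)).take k' = u.take k' := by
        rw [List.take_take]; congr 1; exact min_eq_left hk'.le
      have hk'' : k' < u.length := lt_of_lt_of_le hk' hnle
      have hget : (u.take (Nat.find hexQ)).get ⟨k', h⟩ = u.get ⟨k', hk''⟩ := by
        simp [List.get_eq_getElem, List.getElem_take]
      rw [htt, hget]
      exact humem k' hk''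
    · intro j hj
      have hj' : j < Nat.find hexQ := by rwa [hlen] at hj
      have htt : (u.take (Nat.find hexQ)).take j = u.take j := by
        rw [List.take_take]; congr 1; exact min_eq_left hj'.le
      rw [htt]
      exact lt_of_not_ge (Nat.find_min hexQ hj')
  -- per-vertex bound via independence
  have hGle : ∀ u : List ℕ,
      μ {ω | BRWmem B u ω ∧ (k : ℝ) ≤ BRWpos X u ω ∧
          ∀ j < u.length, BRWpos X (u.take j) ω < k}
      ≤ ∑' z : {z : Fin u.length → ℤ // AdmZ (k : ℤ) u.length z},
          ∏ j : Fin u.length, (pB (u.get j) * νX (z.1 j)) := by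
    intro u
    have hsub : {ω | BRWmem B u ω ∧ (k : ℝ) ≤ BRWpos X u ω ∧
          ∀ j < u.length, BRWpos X (u.take j) ω < k}
        ⊆ (⋃ j : Fin u.length, {ω | ∀ m : ℤ, X (u.take ((j : ℕ)+1)) ω ≠ (m : ℝ)})
          ∪ ⋃ z : {z : Fin u.length → ℤ // AdmZ (k : ℤ) u.length z},
              ⋂ i : Fin u.length ⊕ Fin u.length, Sum.elim
                (fun j : Fin u.length => {ω | u.get j < B (u.take (j : ℕ)) ω})
                (fun j : Fin u.length =>
                  {ω | X (u.take ((j : ℕ)+1)) ω = ((z.1 j : ℤ) : ℝ)}) i := by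
      intro ω hω
      obtain ⟨hmem, hpos, hfirst⟩ := hω
      by_cases hN : ω ∈ ⋃ j : Fin u.length, {ω | ∀ m : ℤ, X (u.take ((j : ℕ)+1)) ω ≠ (m : ℝ)}
      · exact Or.inl hN
      · right
        have hz : ∀ j : Fin u.length, ∃ m : ℤ, X (u.take ((j : ℕ)+1)) ω = (m : ℝ) := by
          intro j
          by_contra hc
          push_neg at hc
          exact hN (Set.mem_iUnion.2 ⟨j, hc⟩)
        set zfun : Fin u.length → ℤ := fun j => (hz j).choose with hzfun
        have hzspec : ∀ j : Fin u.length, X (u.take ((j : ℕ)+1)) ω = ((zfun j : ℤ) : ℝ) :=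
          fun j => (hz j).choose_spec
        have hbridge : ∀ j ≤ u.length, BRWpos X (u.take j) ω = ((psumZ zfun j : ℤ) : ℝ) :=
          fun j hj => BRWpos_eq_psum X u ω zfun hzspec j hj
        have hadm : AdmZ (k : ℤ) u.length zfun := by
          constructor
          · intro j hj
            have := hfirst j hj
            rw [hbridge j hj.le] at this
            exact_mod_cast this
          · have := hpos
            rw [← List.take_length (l := u)] at this
            rw [hbridge u.length le_rfl] at this
            exact_mod_cast this
        refine Set.mem_iUnion.2 ⟨⟨zfun, hadm⟩, ?_⟩
        refine Set.mem_iInter.2 ?_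
        rintro (j | j)
        · exact hmem (j : ℕ) j.isLt
        · exact hzspec j
    refine le_trans (measure_mono hsub) (le_trans (measure_union_le _ _) ?_)
    have hnull : μ (⋃ j : Fin u.length,
        {ω | ∀ m : ℤ, X (u.take ((j : ℕ)+1)) ω ≠ (m : ℝ)}) = 0 :=
      measure_iUnion_null fun j => hXlatv _
    rw [hnull, zero_add]
    refine le_trans (measure_iUnion_le _) ?_
    refine ENNReal.tsum_le_tsum fun z => ?_
    rw [indep_prod_lemma μ B X hindep u z.1]
    refine le_of_eq (Finset.prod_congr rfl fun j _ => ?_)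
    rw [hBeq, hXeq]
  -- assemble
  calc μ {ω | ∃ u, BRWmem B u ω ∧ (k : ℝ) ≤ BRWpos X u ω}
      ≤ μ (⋃ u : List ℕ, {ω | BRWmem B u ω ∧ (k : ℝ) ≤ BRWpos X u ω ∧
          ∀ j < u.length, BRWpos X (u.take j) ω < k}) := measure_mono hcover
    _ ≤ ∑' u : List ℕ, μ {ω | BRWmem B u ω ∧ (k : ℝ) ≤ BRWpos X u ω ∧
          ∀ j < u.length, BRWpos X (u.take j) ω < k} := measure_iUnion_le _
    _ ≤ ∑' u : List ℕ, (∑' z : {z : Fin u.length → ℤ // AdmZ (k : ℤ) u.length z},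
          ∏ j : Fin u.length, (pB (u.get j) * νX (z.1 j))) :=
        ENNReal.tsum_le_tsum hGle
    _ = ∑' x : (Σ n : ℕ, Fin n → ℕ), (∑' z : {z : Fin x.1 → ℤ // AdmZ (k : ℤ) x.1 z},
          ∏ j : Fin x.1, (pB (x.2 j) * νX (z.1 j))) := by
        exact (List.equivSigmaTuple (α := ℕ)).tsum_eq
          (fun x : (Σ n : ℕ, Fin n → ℕ) => ∑' z : {z : Fin x.1 → ℤ // AdmZ (k : ℤ) x.1 z},
            ∏ j : Fin x.1, (pB (x.2 j) * νX (z.1 j)))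
    _ = ∑' n : ℕ, ∑' v : (Fin n → ℕ), (∑' z : {z : Fin n → ℤ // AdmZ (k : ℤ) n z},
          ∏ j : Fin n, (pB (v j) * νX (z.1 j))) := ENNReal.tsum_sigma' _
    _ = ∑' n : ℕ, mE ^ n * (∑' z : {z : Fin n → ℤ // AdmZ (k : ℤ) n z},
          ∏ j : Fin n, νX (z.1 j)) := by
        refine tsum_congr fun n => ?_
        have h1 : ∀ v : Fin n → ℕ,
            (∑' z : {z : Fin n → ℤ // AdmZ (k : ℤ) n z}, ∏ j : Fin n, (pB (v j) * νX (z.1 j)))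
            = (∏ j : Fin n, pB (v j)) * (∑' z : {z : Fin n → ℤ // AdmZ (k : ℤ) n z},
                ∏ j : Fin n, νX (z.1 j)) := by
          intro v
          rw [← ENNReal.tsum_mul_left]
          exact tsum_congr fun z => Finset.prod_mul_distrib
        rw [tsum_congr h1, ENNReal.tsum_mul_right, tsum_pi_prod]
    _ ≤ ∑' n : ℕ, ENNReal.ofReal (Real.exp (-(lam * k))) * TtZ (k : ℤ) ρ n := by
        refine ENNReal.tsum_le_tsum fun n => ?_
        have hTt : TtZ (k : ℤ) ρ n = ∑' z : {z : Fin n → ℤ // AdmZ (k : ℤ) n z},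
            ∏ j : Fin n, ρ (z.1 j) := by
          rw [TtZ, ← tsum_subtype {z : Fin n → ℤ | AdmZ (k : ℤ) n z}
            (fun z => ∏ j : Fin n, ρ (z j))]
          rfl
        rw [hTt, ← ENNReal.tsum_mul_left, ← ENNReal.tsum_mul_left]
        refine ENNReal.tsum_le_tsum fun z => ?_
        obtain ⟨z, hz⟩ := z
        have hsZ : ((k : ℤ) : ℝ) ≤ ((psumZ z n : ℤ) : ℝ) := by exact_mod_cast hz.2
        have hprodρ : ∏ j : Fin n, ρ (z j)
            = mE ^ n * (ENNReal.ofReal (Real.exp (lam * ((psumZ z n : ℤ) : ℝ)))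
                * ∏ j : Fin n, νX (z j)) := by
          rw [hρdef]
          rw [Finset.prod_mul_distrib, Finset.prod_mul_distrib]
          rw [Finset.prod_const, Finset.card_univ, Fintype.card_fin]
          congr 1
          congr 1
          rw [← ENNReal.ofReal_prod_of_nonneg (fun _ _ => (Real.exp_pos _).le),
            ← Real.exp_sum]
          congr 1
          rw [psumZ_length]
          push_cast
          rw [Finset.mul_sum]
        rw [hprodρ]
        have hfac : (1 : ℝ≥0∞) ≤ ENNReal.ofReal (Real.exp (-(lam * k)))
            * ENNReal.ofReal (Real.exp (lam * ((psumZ z n : ℤ) : ℝ))) := by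
          rw [← ENNReal.ofReal_mul (Real.exp_nonneg _), ← Real.exp_add]
          refine ENNReal.one_le_ofReal.2 (Real.one_le_exp ?_)
          have : (k : ℝ) ≤ ((psumZ z n : ℤ) : ℝ) := by exact_mod_cast hz.2
          nlinarith
        calc mE ^ n * ∏ j : Fin n, νX (z j)
            = 1 * (mE ^ n * ∏ j : Fin n, νX (z j)) := (one_mul _).symm
          _ ≤ (ENNReal.ofReal (Real.exp (-(lam * k)))
              * ENNReal.ofReal (Real.exp (lam * ((psumZ z n : ℤ) : ℝ))))
              * (mE ^ n * ∏ j : Fin n, νX (z j)) := mul_le_mul_left hfac _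
          _ = ENNReal.ofReal (Real.exp (-(lam * k)))
              * (mE ^ n * (ENNReal.ofReal (Real.exp (lam * ((psumZ z n : ℤ) : ℝ)))
                * ∏ j : Fin n, νX (z j))) := by ring
    _ = ENNReal.ofReal (Real.exp (-(lam * k))) * ∑' n : ℕ, TtZ (k : ℤ) ρ n :=
        ENNReal.tsum_mul_left
    _ ≤ ENNReal.ofReal (Real.exp (-(lam * k))) * 1 :=
        mul_le_mul_right (TtZ_tsum_le (k : ℤ) ρ hk0 hρ1) _
    _ = ENNReal.ofReal (Real.exp (-(lam * k))) := mul_one _
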